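/- Let φ(y) = (1+y)(log(1+y) − 1) + 1 for y > −1. Then for every y ∈ (−1, 1), φ(y) ≥ y²/3. -/

import Mathlib

/-- For `x ≥ 1`, `2 - 4/(x+1) ≤ log x` (i.e. `2(x-1)/(x+1) ≤ log x`). -/
lemma log_ge_pade (x : ℝ) (hx : 1 ≤ x) : 2 - 4 * (x + 1)⁻¹ ≤ Real.log x := by
  set F : ℝ → ℝ := fun t => Real.log t - (2 - 4 * (t + 1)⁻¹) with hF
  have hmono : MonotoneOn F (Set.Ici (1 : ℝ)) := by
    have hderiv : ∀ t ∈ Set.Ioi (1 : ℝ),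
        HasDerivAt F (t⁻¹ - (0 - 4 * (-1 / (t + 1) ^ 2))) t := by
      intro t ht
      have ht0 : (0 : ℝ) < t := lt_trans one_pos ht
      have ht1 : t + 1 ≠ 0 := by positivity
      have h1 : HasDerivAt (fun s : ℝ => (s + 1)⁻¹) (-1 / (t + 1) ^ 2) t := by
        have := ((hasDerivAt_id t).add_const 1).inv ht1
        exact this
      exact (Real.hasDerivAt_log ht0.ne').sub
        ((hasDerivAt_const t 2).sub (h1.const_mul 4))
    apply monotoneOn_of_deriv_nonneg (convex_Ici 1)
    · intro t ht
      have ht0 : (0 : ℝ) < t := lt_of_lt_of_le one_pos ht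
      have ht1 : (t : ℝ) + 1 ≠ 0 := by positivity
      have : ContinuousAt F t := by
        apply ContinuousAt.sub
        · exact Real.continuousAt_log ht0.ne'
        · exact (continuousAt_const.sub
            (continuousAt_const.mul (((continuousAt_id).add continuousAt_const).inv₀ ht1)))
      exact this.continuousWithinAt
    · intro t ht
      rw [interior_Ici] at ht
      exact (hderiv t ht).differentiableAt.differentiableWithinAt
    · intro t ht
      rw [interior_Ici] at ht
      rw [(hderiv t ht).deriv]
      have ht0 : (0 : ℝ) < t := lt_trans one_pos ht
      have h2 : t⁻¹ - (0 - 4 * (-1 / (t + 1) ^ 2)) = (t - 1) ^ 2 / (t * (t + 1) ^ 2) := by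
        field_simp
        ring
      rw [h2]
      positivity
  have := hmono (Set.self_mem_Ici) (Set.mem_Ici.2 hx) hx
  simp only [hF] at this
  norm_num at this
  linarith

/-- For `t ≥ 1`, `log t ≤ (t - 1/t)/2`. -/
lemma log_le_half (t : ℝ) (ht : 1 ≤ t) : Real.log t ≤ (t - t⁻¹) / 2 := by
  set G : ℝ → ℝ := fun s => (s - s⁻¹) / 2 - Real.log s with hG
  have hmono : MonotoneOn G (Set.Ici (1 : ℝ)) := by
    have hderiv : ∀ s ∈ Set.Ioi (1 : ℝ),
        HasDerivAt G ((1 - -(s ^ 2)⁻¹) / 2 - s⁻¹) s := by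
      intro s hs
      have hs0 : (0 : ℝ) < s := lt_trans one_pos hs
      exact (((hasDerivAt_id s).sub (hasDerivAt_inv hs0.ne')).div_const 2).sub
        (Real.hasDerivAt_log hs0.ne')
    apply monotoneOn_of_deriv_nonneg (convex_Ici 1)
    · intro s hs
      have hs0 : (0 : ℝ) < s := lt_of_lt_of_le one_pos hs
      have : ContinuousAt G s := by
        apply ContinuousAt.sub
        · exact ((continuousAt_id.sub (continuousAt_id.inv₀ hs0.ne')).div_const 2)
        · exact Real.continuousAt_log hs0.ne'
      exact this.continuousWithinAt
    · intro s hs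
      rw [interior_Ici] at hs
      exact (hderiv s hs).differentiableAt.differentiableWithinAt
    · intro s hs
      rw [interior_Ici] at hs
      rw [(hderiv s hs).deriv]
      have hs0 : (0 : ℝ) < s := lt_trans one_pos hs
      have h2 : (1 - -(s ^ 2)⁻¹) / 2 - s⁻¹ = (s - 1) ^ 2 / (2 * s ^ 2) := by
        field_simp
        ring
      rw [h2]
      positivity
  have := hmono (Set.self_mem_Ici) (Set.mem_Ici.2 ht) ht
  simp only [hG] at this
  norm_num at this
  linarith

/-- Taylor-expansion inequality: for `φ(y) = (1+y)(log(1+y) − 1) + 1`,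
we have `φ(y) ≥ y²/3` for all `y ∈ (−1, 1)`. -/
theorem phi_ge_sq_div_three (y : ℝ) (hy₁ : -1 < y) (hy₂ : y < 1) :
    (1 + y) * (Real.log (1 + y) - 1) + 1 ≥ y ^ 2 / 3 := by
  have hx0 : (0 : ℝ) < 1 + y := by linarith
  rcases le_or_gt 0 y with hy | hy
  · -- y ≥ 0 : use log(1+y) ≥ 2 - 4/(2+y)
    have h := log_ge_pade (1 + y) (by linarith)
    have h2 : (0 : ℝ) < 1 + y + 1 := by linarith
    have h3 : Real.log (1 + y) * (1 + y + 1) ≥ 2 * (1 + y + 1) - 4 := by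
      have := mul_le_mul_of_nonneg_right h (le_of_lt h2)
      have h4 : (1 + y + 1)⁻¹ * (1 + y + 1) = 1 := inv_mul_cancel₀ h2.ne'
      nlinarith [this]
    nlinarith [mul_le_mul_of_nonneg_left h3.le (le_of_lt hx0), sq_nonneg y,
      mul_nonneg (mul_nonneg (sq_nonneg y) hy) (le_of_lt hx0)]
  · -- y < 0 : use log(1/(1+y)) ≤ ((1/(1+y)) - (1+y))/2
    have ht : (1 : ℝ) ≤ (1 + y)⁻¹ := by
      rw [le_inv_comm₀ one_pos hx0]
      linarith
    have h := log_le_half ((1 + y)⁻¹) ht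
    rw [Real.log_inv, inv_inv] at h
    -- h : -log(1+y) ≤ ((1+y)⁻¹ - (1+y))/2
    have hlog : Real.log (1 + y) ≥ ((1 + y) - (1 + y)⁻¹) / 2 := by linarith
    have hmul : (1 + y) * Real.log (1 + y) ≥ ((1 + y) ^ 2 - 1) / 2 := by
      have := mul_le_mul_of_nonneg_left hlog (le_of_lt hx0)
      have h4 : (1 + y) * (1 + y)⁻¹ = 1 := mul_inv_cancel₀ hx0.ne'
      nlinarith [this]
    nlinarith [sq_nonneg y]
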